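/- Let (Γ, Λ) be a matched pair of discrete groups, B a Fell bundle over Γ with (Γ,Λ)-compatible Λ-action β, and π a *-representation of B on a Hilbert space H. Define, on ℓ²(Γ ⋈ Λ) ⊗ H, Π(b)(δ_{(x,h)} ⊗ ξ) = δ_{(p(b)x, h)} ⊗ π(β(h⁻¹|_{(p(b)x)⁻¹}, b))ξ. Then each Π(b) is bounded with ‖Π(b)‖ ≤ ‖b‖, and Π is a *-representation of B: Π is fibrewise linear, Π(bc) = Π(b)Π(c), and Π(b*) = Π(b)*. -/

import Mathlib

/-- A matched pair of (discrete) groups `(Γ, Λ)`: a left `Λ`-action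
`act : Λ → Γ → Γ` (written `h·x`) and a `Γ`-restriction `res : Λ → Γ → Λ`
(written `h|_x`) satisfying the Zappa–Szép axioms (ZS1)–(ZS9). -/
structure MatchedPairGrp (Γ Λ : Type*) [Group Γ] [Group Λ] where
  act : Λ → Γ → Γ
  res : Λ → Γ → Λ
  mul_act : ∀ g h x, act (g * h) x = act g (act h x)
  one_act : ∀ x, act 1 x = x
  act_one : ∀ h, act h 1 = 1
  res_one : ∀ h, res h 1 = h
  one_res : ∀ x, res 1 x = 1
  res_mul : ∀ h x y, res h (x * y) = res (res h x) y
  act_mul : ∀ h x y, act h (x * y) = act h x * act (res h x) y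
  mul_res : ∀ g h x, res (g * h) x = res g (act h x) * res h x

namespace MatchedPairGrp

variable {Γ Λ : Type*} [Group Γ] [Group Λ] (M : MatchedPairGrp Γ Λ)

theorem act_act_inv (h : Λ) (x : Γ) : M.act h (M.act h⁻¹ x) = x := by
  rw [← M.mul_act, mul_inv_cancel, M.one_act]

theorem res_act_inv (k : Λ) (z : Γ) :
    M.res k (M.act k⁻¹ z) = (M.res k⁻¹ z)⁻¹ := by
  have h0 := M.mul_res k k⁻¹ z
  rw [mul_inv_cancel, M.one_res] at h0
  exact eq_inv_of_mul_eq_one_left h0.symm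

theorem inv_act_eq (h : Λ) (x : Γ) :
    (M.act h x)⁻¹ = M.act (M.res h x) x⁻¹ := by
  have e : M.act h x * M.act (M.res h x) x⁻¹ = 1 := by
    rw [← M.act_mul, mul_inv_cancel, M.act_one]
  exact inv_eq_of_mul_eq_one_right e

/-- The base point of `σ*(x,h)` in the Zappa–Szép product bundle is again `x`. -/
theorem zs_star_base (x : Γ) (h : Λ) :
    M.act (M.res h⁻¹ x⁻¹)⁻¹ (M.act h⁻¹ x⁻¹)⁻¹ = x := by
  rw [inv_act_eq M h⁻¹ x⁻¹, inv_inv, ← M.mul_act, inv_mul_cancel, M.one_act]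

/-- Multiplication of the Zappa–Szép product group `Γ ⋈ Λ` (on `Γ × Λ`):
`(x,h)(y,k) = (x (h·y), h|_y k)`. -/
def zmul (p q : Γ × Λ) : Γ × Λ := (p.1 * M.act p.2 q.1, M.res p.2 q.1 * q.2)

/-- Inversion of the Zappa–Szép product group:
`(x,h)⁻¹ = (h⁻¹·x⁻¹, h⁻¹|_{x⁻¹})`. -/
def zinv (p : Γ × Λ) : Γ × Λ := (M.act p.2⁻¹ p.1⁻¹, M.res p.2⁻¹ p.1⁻¹)

theorem res_inv_act (m : Λ) (x : Γ) :
    M.res m⁻¹ (M.act m x) = (M.res m x)⁻¹ := by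
  have h0 := M.mul_res m⁻¹ m x
  rw [inv_mul_cancel, M.one_res] at h0
  exact eq_inv_of_mul_eq_one_left h0.symm

theorem zmul_zinv_cancel_left (p q : Γ × Λ) :
    M.zmul p (M.zmul (M.zinv p) q) = q := by
  obtain ⟨y, k⟩ := p
  obtain ⟨x, h⟩ := q
  simp only [zmul, zinv]
  have hw : M.act k (M.act k⁻¹ y⁻¹) = y⁻¹ := M.act_act_inv k y⁻¹
  have hm : M.res k (M.act k⁻¹ y⁻¹) = (M.res k⁻¹ y⁻¹)⁻¹ := M.res_act_inv k y⁻¹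
  refine Prod.ext ?_ ?_
  · show y * M.act k (M.act k⁻¹ y⁻¹ * M.act (M.res k⁻¹ y⁻¹) x) = x
    rw [M.act_mul, hw, hm, ← M.mul_act, inv_mul_cancel, M.one_act, mul_inv_cancel_left]
  · show M.res k (M.act k⁻¹ y⁻¹ * M.act (M.res k⁻¹ y⁻¹) x) * (M.res (M.res k⁻¹ y⁻¹) x * h) = h
    rw [M.res_mul, hm, res_inv_act, inv_mul_cancel_left]

end MatchedPairGrp

/-- A Fell bundle over the discrete group `Γ`, in fibred form: Banach-space
fibres `B x`, multiplication `B_x × B_y → B_{xy}`, involution `B_x → B_{x⁻¹}`,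
with axioms (F1)–(F9); cross-fibre equalities are stated via `HEq`. -/
structure FellBdlGrp (Γ : Type*) [Group Γ] (B : Γ → Type*)
    [∀ x, NormedAddCommGroup (B x)] [∀ x, NormedSpace ℂ (B x)] where
  fmul : ∀ {x y : Γ}, B x → B y → B (x * y)
  fstar : ∀ {x : Γ}, B x → B x⁻¹
  fmul_add : ∀ {x y : Γ} (a : B x) (b c : B y), fmul a (b + c) = fmul a b + fmul a c
  add_fmul : ∀ {x y : Γ} (a b : B x) (c : B y), fmul (a + b) c = fmul a c + fmul b c
  smul_fmul : ∀ {x y : Γ} (z : ℂ) (a : B x) (b : B y), fmul (z • a) b = z • fmul a b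
  fmul_smul : ∀ {x y : Γ} (z : ℂ) (a : B x) (b : B y), fmul a (z • b) = z • fmul a b
  fmul_assoc : ∀ {x y z : Γ} (a : B x) (b : B y) (c : B z),
    HEq (fmul (fmul a b) c) (fmul a (fmul b c))
  norm_fmul_le : ∀ {x y : Γ} (a : B x) (b : B y), ‖fmul a b‖ ≤ ‖a‖ * ‖b‖
  fstar_add : ∀ {x : Γ} (a b : B x), fstar (a + b) = fstar a + fstar b
  fstar_smul : ∀ {x : Γ} (z : ℂ) (a : B x), fstar (z • a) = (starRingEnd ℂ z) • fstar a
  fstar_fmul : ∀ {x y : Γ} (a : B x) (b : B y),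
    HEq (fstar (fmul a b)) (fmul (fstar b) (fstar a))
  fstar_fstar : ∀ {x : Γ} (a : B x), HEq (fstar (fstar a)) a
  norm_fstar : ∀ {x : Γ} (a : B x), ‖fstar a‖ = ‖a‖
  norm_fstar_fmul : ∀ {x : Γ} (a : B x), ‖fmul (fstar a) a‖ = ‖a‖ ^ 2

/-- A `(Γ,Λ)`-compatible `Λ`-action `β` on a Fell bundle over `Γ`,
satisfying (A1)–(A5). -/
structure CompatGrp {Γ Λ : Type*} [Group Γ] [Group Λ] (M : MatchedPairGrp Γ Λ)
    (B : Γ → Type*) [∀ x, NormedAddCommGroup (B x)] [∀ x, NormedSpace ℂ (B x)]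
    (F : FellBdlGrp Γ B) where
  β : ∀ (h : Λ) {x : Γ}, B x → B (M.act h x)
  β_add : ∀ (h : Λ) {x : Γ} (a b : B x), β h (a + b) = β h a + β h b
  β_smul : ∀ (h : Λ) {x : Γ} (z : ℂ) (a : B x), β h (z • a) = z • β h a
  β_mul : ∀ (g h : Λ) {x : Γ} (a : B x), HEq (β (g * h) a) (β g (β h a))
  β_one : ∀ {x : Γ} (a : B x), HEq (β 1 a) a
  β_fmul : ∀ (h : Λ) {x y : Γ} (a : B x) (b : B y),
    HEq (β h (F.fmul a b)) (F.fmul (β h a) (β (M.res h x) b))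
  β_fstar : ∀ (h : Λ) {x : Γ} (a : B x),
    HEq (F.fstar (β h a)) (β (M.res h x) (F.fstar a))


section ShiftMul
open scoped ENNReal

variable {I : Type*} {H : Type*} [NormedAddCommGroup H] [InnerProductSpace ℂ H] [CompleteSpace H]

theorem shiftMul_memℓp (σ : I ≃ I) (S : I → (H →L[ℂ] H)) {C : ℝ} (hC : 0 ≤ C)
    (hS : ∀ i, ‖S i‖ ≤ C) (f : lp (fun _ : I => H) 2) :
    Memℓp (fun i => S i (f (σ i))) 2 := by
  apply memℓp_gen
  have h2 : (0:ℝ) < (2 : ℝ≥0∞).toReal := by norm_num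
  have hf : Summable fun i => ‖f (σ i)‖ ^ (2 : ℝ≥0∞).toReal :=
    ((lp.memℓp f).summable h2).comp_injective σ.injective
  refine Summable.of_nonneg_of_le (fun i => Real.rpow_nonneg (norm_nonneg _) _)
    (fun i => ?_) (hf.mul_left (C ^ (2 : ℝ≥0∞).toReal))
  calc ‖S i (f (σ i))‖ ^ (2 : ℝ≥0∞).toReal
      ≤ (C * ‖f (σ i)‖) ^ (2 : ℝ≥0∞).toReal := by
        apply Real.rpow_le_rpow (norm_nonneg _) _ h2.le
        exact ((S i).le_opNorm _).trans (mul_le_mul_of_nonneg_right (hS i) (norm_nonneg _))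
    _ = C ^ (2 : ℝ≥0∞).toReal * ‖f (σ i)‖ ^ (2 : ℝ≥0∞).toReal := Real.mul_rpow hC (norm_nonneg _)

noncomputable def shiftMulOp (σ : I ≃ I) (S : I → (H →L[ℂ] H)) (C : ℝ) (hC : 0 ≤ C)
    (hS : ∀ i, ‖S i‖ ≤ C) : lp (fun _ : I => H) 2 →L[ℂ] lp (fun _ : I => H) 2 :=
  LinearMap.mkContinuous
    { toFun := fun f => ⟨fun i => S i (f (σ i)), shiftMul_memℓp σ S hC hS f⟩
      map_add' := fun f g => lp.ext (funext fun i => by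
        simp [lp.coeFn_add, Pi.add_apply]; rfl)
      map_smul' := fun c f => lp.ext (funext fun i => by
        simp [lp.coeFn_smul, Pi.smul_apply]) }
    C
    (fun f => by
      have h2 : (0:ℝ) < (2 : ℝ≥0∞).toReal := by norm_num
      refine lp.norm_le_of_tsum_le h2 (mul_nonneg hC (norm_nonneg f)) ?_
      have hf : Summable fun i => ‖f (σ i)‖ ^ (2 : ℝ≥0∞).toReal :=
        ((lp.memℓp f).summable h2).comp_injective σ.injective
      have hg : Summable fun i => ‖S i (f (σ i))‖ ^ (2 : ℝ≥0∞).toReal := by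
        have := shiftMul_memℓp σ S hC hS f
        exact this.summable h2
      have hle : ∀ i, ‖S i (f (σ i))‖ ^ (2 : ℝ≥0∞).toReal
          ≤ C ^ (2 : ℝ≥0∞).toReal * ‖f (σ i)‖ ^ (2 : ℝ≥0∞).toReal := by
        intro i
        rw [← Real.mul_rpow hC (norm_nonneg _)]
        apply Real.rpow_le_rpow (norm_nonneg _) _ h2.le
        exact ((S i).le_opNorm _).trans (mul_le_mul_of_nonneg_right (hS i) (norm_nonneg _))
      calc (∑' i, ‖(⟨fun i => S i (f (σ i)), shiftMul_memℓp σ S hC hS f⟩ : lp (fun _ : I => H) 2) i‖ ^ (2 : ℝ≥0∞).toReal)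
          = ∑' i, ‖S i (f (σ i))‖ ^ (2 : ℝ≥0∞).toReal := rfl
        _ ≤ ∑' i, C ^ (2 : ℝ≥0∞).toReal * ‖f (σ i)‖ ^ (2 : ℝ≥0∞).toReal :=
            Summable.tsum_le_tsum hle hg (hf.mul_left _)
        _ = C ^ (2 : ℝ≥0∞).toReal * ∑' i, ‖f (σ i)‖ ^ (2 : ℝ≥0∞).toReal := tsum_mul_left
        _ = C ^ (2 : ℝ≥0∞).toReal * ∑' j, ‖f j‖ ^ (2 : ℝ≥0∞).toReal := by
            rw [σ.tsum_eq (fun j => ‖f j‖ ^ (2 : ℝ≥0∞).toReal)]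
        _ = C ^ (2 : ℝ≥0∞).toReal * ‖f‖ ^ (2 : ℝ≥0∞).toReal := by
            rw [← lp.norm_rpow_eq_tsum h2]
        _ = (C * ‖f‖) ^ (2 : ℝ≥0∞).toReal := (Real.mul_rpow hC (norm_nonneg _)).symm)

theorem shiftMulOp_apply (σ : I ≃ I) (S : I → (H →L[ℂ] H)) (C : ℝ) (hC : 0 ≤ C)
    (hS : ∀ i, ‖S i‖ ≤ C) (f : lp (fun _ : I => H) 2) (i : I) :
    shiftMulOp σ S C hC hS f i = S i (f (σ i)) := rfl

theorem shiftMulOp_norm_le (σ : I ≃ I) (S : I → (H →L[ℂ] H)) (C : ℝ) (hC : 0 ≤ C)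
    (hS : ∀ i, ‖S i‖ ≤ C) : ‖shiftMulOp σ S C hC hS‖ ≤ C :=
  LinearMap.mkContinuous_norm_le _ hC _

end ShiftMul

section Stmt15

open scoped Classical

/-- Twisted amplification.  Let `(Γ, Λ)` be a matched pair of discrete groups,
`B` a Fell bundle over `Γ` with `(Γ,Λ)`-compatible `Λ`-action `β` (with each
`β_h` isometric), and `π` a `*`-representation of `B` on a Hilbert space `H`.
Then on `ℓ²(Γ ⋈ Λ) ⊗ H = ℓ²(Γ × Λ; H)` there are bounded operators `Π(b)`
with `Π(b)(δ_{(x,h)} ⊗ ξ) = δ_{(p(b)x, h)} ⊗ π(β(h⁻¹|_{(p(b)x)⁻¹}, b)) ξ`,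
`‖Π(b)‖ ≤ ‖b‖`, and `Π` is a `*`-representation of `B`: fibrewise linear,
multiplicative, and `*`-preserving. -/
theorem twisted_amplification {Γ Λ : Type*} [Group Γ] [Group Λ]
    (M : MatchedPairGrp Γ Λ)
    (B : Γ → Type*) [∀ x, NormedAddCommGroup (B x)] [∀ x, NormedSpace ℂ (B x)]
    (F : FellBdlGrp Γ B) (A : CompatGrp M B F)
    (hβ_iso : ∀ (h : Λ) (x : Γ) (a : B x), ‖A.β h a‖ = ‖a‖)
    {H : Type*} [NormedAddCommGroup H] [InnerProductSpace ℂ H] [CompleteSpace H]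
    (π : ∀ x : Γ, B x → (H →L[ℂ] H))
    (hπ_add : ∀ (x : Γ) (a b : B x), π x (a + b) = π x a + π x b)
    (hπ_smul : ∀ (x : Γ) (z : ℂ) (a : B x), π x (z • a) = z • π x a)
    (hπ_mul : ∀ (x y : Γ) (a : B x) (b : B y),
      π (x * y) (F.fmul a b) = π x a * π y b)
    (hπ_star : ∀ (x : Γ) (a : B x),
      π x⁻¹ (F.fstar a) = ContinuousLinearMap.adjoint (π x a))
    (hπ_norm : ∀ (x : Γ) (a : B x), ‖π x a‖ ≤ ‖a‖) :
    ∃ PiAmp : ∀ x₀ : Γ, B x₀ →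
        (lp (fun _ : Γ × Λ => H) 2 →L[ℂ] lp (fun _ : Γ × Λ => H) 2),
      -- defining formula on elementary tensors `δ_{(x,h)} ⊗ ξ`:
      (∀ (x₀ : Γ) (b : B x₀) (x : Γ) (h : Λ) (ξ : H),
        PiAmp x₀ b (lp.single 2 (x, h) ξ) =
          lp.single 2 (x₀ * x, h)
            (π (M.act (M.res h⁻¹ (x₀ * x)⁻¹) x₀)
              (A.β (M.res h⁻¹ (x₀ * x)⁻¹) b) ξ)) ∧
      -- boundedness:
      (∀ (x₀ : Γ) (b : B x₀), ‖PiAmp x₀ b‖ ≤ ‖b‖) ∧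
      -- fibrewise linearity:
      (∀ (x₀ : Γ) (a b : B x₀), PiAmp x₀ (a + b) = PiAmp x₀ a + PiAmp x₀ b) ∧
      (∀ (x₀ : Γ) (z : ℂ) (a : B x₀), PiAmp x₀ (z • a) = z • PiAmp x₀ a) ∧
      -- multiplicativity:
      (∀ (x y : Γ) (a : B x) (b : B y),
        PiAmp (x * y) (F.fmul a b) = PiAmp x a * PiAmp y b) ∧
      -- `*`-preservation:
      (∀ (x : Γ) (a : B x),
        PiAmp x⁻¹ (F.fstar a) = ContinuousLinearMap.adjoint (PiAmp x a)) := by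
  classical
  have pi_cast : ∀ {s t : Γ}, s = t → ∀ {u : B s} {v : B t}, HEq u v → π s u = π t v := by
    intro s t hst u v huv
    subst hst
    rw [eq_of_heq huv]
  have hσ : ∀ (x₀ z : Γ) (k : Λ),
      ((Equiv.mulLeft x₀⁻¹).prodCongr (Equiv.refl Λ)) (z, k) = (x₀⁻¹ * z, k) :=
    fun _ _ _ => rfl
  refine ⟨fun x₀ b => shiftMulOp ((Equiv.mulLeft x₀⁻¹).prodCongr (Equiv.refl Λ))
      (fun i => π (M.act (M.res i.2⁻¹ i.1⁻¹) x₀) (A.β (M.res i.2⁻¹ i.1⁻¹) b))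
      ‖b‖ (norm_nonneg b)
      (fun i => (hπ_norm _ _).trans (le_of_eq (hβ_iso _ _ b))), ?_, ?_, ?_, ?_, ?_, ?_⟩
  · -- defining formula on singles
    intro x₀ b x h ξ
    refine lp.ext (funext ?_)
    rintro ⟨z, k⟩
    rw [shiftMulOp_apply, hσ]
    by_cases hz : (z, k) = (x₀ * x, h)
    · rw [Prod.mk.injEq] at hz
      obtain ⟨rfl, rfl⟩ := hz
      rw [inv_mul_cancel_left, lp.single_apply_self, lp.single_apply_self]
    · have h1 : (x₀⁻¹ * z, k) ≠ (x, h) := by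
        intro hc
        apply hz
        rw [Prod.mk.injEq] at hc ⊢
        exact ⟨by rw [← hc.1, mul_inv_cancel_left], hc.2⟩
      rw [lp.single_apply_ne _ _ _ h1, map_zero, lp.single_apply_ne _ _ _ hz]
  · -- norm bound
    intro x₀ b
    exact shiftMulOp_norm_le _ _ _ (norm_nonneg b) _
  · -- additivity
    intro x₀ a b
    refine ContinuousLinearMap.ext fun f => lp.ext (funext ?_)
    rintro ⟨z, k⟩
    rw [ContinuousLinearMap.add_apply, lp.coeFn_add, Pi.add_apply,
      shiftMulOp_apply, shiftMulOp_apply, shiftMulOp_apply]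
    simp only [A.β_add, hπ_add, ContinuousLinearMap.add_apply]
  · -- homogeneity
    intro x₀ c a
    refine ContinuousLinearMap.ext fun f => lp.ext (funext ?_)
    rintro ⟨z, k⟩
    rw [ContinuousLinearMap.smul_apply, lp.coeFn_smul, Pi.smul_apply,
      shiftMulOp_apply, shiftMulOp_apply]
    simp only [A.β_smul, hπ_smul, ContinuousLinearMap.smul_apply]
  · -- multiplicativity
    intro x y a b
    refine ContinuousLinearMap.ext fun f => lp.ext (funext ?_)
    rintro ⟨z, k⟩
    simp only [ContinuousLinearMap.mul_apply, shiftMulOp_apply, hσ]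
    have harg : (x * y)⁻¹ * z = y⁻¹ * (x⁻¹ * z) := by rw [mul_inv_rev, mul_assoc]
    have hres : M.res k⁻¹ ((x⁻¹ * z)⁻¹) = M.res (M.res k⁻¹ z⁻¹) x := by
      rw [mul_inv_rev, inv_inv, M.res_mul]
    rw [hσ]
    rw [hres, harg,
      pi_cast (M.act_mul (M.res k⁻¹ z⁻¹) x y) (A.β_fmul (M.res k⁻¹ z⁻¹) a b), hπ_mul,
      ContinuousLinearMap.mul_apply]
  · -- star-preservation
    intro x a
    rw [ContinuousLinearMap.eq_adjoint_iff]
    intro f g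
    rw [lp.inner_eq_tsum, lp.inner_eq_tsum]
    refine Eq.trans (Equiv.tsum_eq ((Equiv.mulLeft x⁻¹).prodCongr (Equiv.refl Λ)) _).symm
      (tsum_congr ?_)
    rintro ⟨z, k⟩
    simp only [hσ, shiftMulOp_apply]
    rw [inv_inv, mul_inv_cancel_left]
    have hres : M.res k⁻¹ ((x⁻¹ * z)⁻¹) = M.res (M.res k⁻¹ z⁻¹) x := by
      rw [mul_inv_rev, inv_inv, M.res_mul]
    rw [hres,
      pi_cast (M.inv_act_eq (M.res k⁻¹ z⁻¹) x).symm (A.β_fstar (M.res k⁻¹ z⁻¹) a).symm,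
      hπ_star, ContinuousLinearMap.adjoint_inner_left]

end Stmt15
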